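/- In the real/complex cone setup, the following characterizations hold: (a) 𝒞_ℂ = {h ∈ B_ℂ ∖ {0} : Re(ℓ(h)·conj(m(h))) ≥ 0 for all ℓ, m ∈ 𝒞'_ℝ}; (b) 𝒞'_ℂ = {ℓ ∈ B'_ℂ : Re(ℓ(x)·conj(ℓ(y))) > 0 for all x, y ∈ 𝒞_ℝ}; (c) 𝒞'_ℂ ⊇ Ĉ'_ℂ := {±ℓ ± ip : ℓ, p ∈ 𝒞̊'_ℝ}, where 𝒞̊'_ℝ = {ℓ ∈ 𝒞'_ℝ : ℓ(x) > 0 for all x ∈ 𝒞_ℝ}. -/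

import Mathlib

open Complex Set ENNReal

namespace ConeSetup

variable {B : Type*} [NormedAddCommGroup B] [NormedSpace ℝ B]

/-- Complex scalar multiplication on the complexification `B × B`:
`(a+ib)(x,y) = (ax − by, ay + bx)`. -/
def cSmul (z : ℂ) (p : B × B) : B × B :=
  (z.re • p.1 - z.im • p.2, z.re • p.2 + z.im • p.1)

/-- The "real" norm `‖(x,y)‖_r = √(‖x‖² + ‖y‖²)` on the complexification. -/
noncomputable def rNorm (p : B × B) : ℝ :=
  Real.sqrt (‖p.1‖ ^ 2 + ‖p.2‖ ^ 2)

/-- The complexification norm `‖(x,y)‖ = sup_{θ∈[0,2π]} ‖e^{iθ}(x,y)‖_r`. -/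
noncomputable def cNorm (p : B × B) : ℝ :=
  sSup ((fun θ : ℝ => rNorm (cSmul (Complex.exp (θ * Complex.I)) p)) ''
    Set.Icc 0 (2 * Real.pi))

/-- The real cone `𝒞_ℝ = {h ≠ 0 : ℓ(h) ≥ 0 for all ℓ ∈ S}`. -/
def realCone (S : Set (B →L[ℝ] ℝ)) : Set B :=
  {h | h ≠ 0 ∧ ∀ ℓ ∈ S, 0 ≤ ℓ h}

/-- The complex cone `𝒞_ℂ = ℂ_* ⋅ (𝒞_ℝ + i 𝒞_ℝ)`. -/
def complexCone (S : Set (B →L[ℝ] ℝ)) : Set (B × B) :=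
  {p | ∃ z : ℂ, z ≠ 0 ∧ ∃ x ∈ realCone S, ∃ y ∈ realCone S, p = cSmul z (x, y)}

/-- A map `B × B → ℂ` is a (continuous) complex-linear functional for the complex
structure `cSmul`. -/
def IsCLinearFunctional (ℓ : B × B → ℂ) : Prop :=
  (∀ p q : B × B, ℓ (p + q) = ℓ p + ℓ q) ∧
  (∀ (z : ℂ) (p : B × B), ℓ (cSmul z p) = z * ℓ p) ∧
  Continuous ℓ

/-- The dual real cone `𝒞'_ℝ = {ℓ ∈ B'_ℝ : ℓ(h) ≥ 0 for all h ∈ 𝒞_ℝ}`. -/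
def dualRealCone (S : Set (B →L[ℝ] ℝ)) : Set (B →L[ℝ] ℝ) :=
  {ℓ | ∀ h ∈ realCone S, 0 ≤ ℓ h}

/-- The dual complex cone `𝒞'_ℂ = {ℓ ∈ B'_ℂ : ℓ(h) ≠ 0 for all h ∈ 𝒞_ℂ}`. -/
def dualComplexCone (S : Set (B →L[ℝ] ℝ)) : Set (B × B → ℂ) :=
  {ℓ | IsCLinearFunctional ℓ ∧ ∀ h ∈ complexCone S, ℓ h ≠ 0}

/-- The action of a real functional on the complexification: `ℓ(x+iy) = ℓ(x) + iℓ(y)`. -/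
noncomputable def cext (ℓ : B →L[ℝ] ℝ) (p : B × B) : ℂ :=
  (ℓ p.1 : ℂ) + (ℓ p.2 : ℂ) * Complex.I

/-- `𝒞̊'_ℝ = {ℓ ∈ 𝒞'_ℝ : ℓ(x) > 0 for all x ∈ 𝒞_ℝ}`. -/
def interiorDualRealCone (S : Set (B →L[ℝ] ℝ)) : Set (B →L[ℝ] ℝ) :=
  {ℓ | ℓ ∈ dualRealCone S ∧ ∀ x ∈ realCone S, 0 < ℓ x}

/-- `Ĉ'_ℂ = {±ℓ ± ip : ℓ, p ∈ 𝒞̊'_ℝ}`. -/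
def hatDualComplexCone (S : Set (B →L[ℝ] ℝ)) : Set (B × B → ℂ) :=
  {q | ∃ ℓ ∈ interiorDualRealCone S, ∃ p ∈ interiorDualRealCone S,
    ∃ ε₁ ∈ ({1, -1} : Set ℝ), ∃ ε₂ ∈ ({1, -1} : Set ℝ),
      q = fun v => (ε₁ : ℂ) * cext ℓ v + (ε₂ : ℂ) * Complex.I * cext p v}

/-- `E_𝒞(h,g) = {ℓ(h)/ℓ(g) : ℓ ∈ 𝒞'_ℂ}`. -/
def gaugeSet (S : Set (B →L[ℝ] ℝ)) (h g : B × B) : Set ℂ :=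
  {z | ∃ ℓ ∈ dualComplexCone S, z = ℓ h / ℓ g}

/-- The projective gauge
`δ_𝒞(h,g) = ln( sup_{z∈E_𝒞(h,g)} |z| / inf_{z∈E_𝒞(h,g)} |z| ) = sup_{z,w∈E_𝒞(h,g)} ln|z/w|`,
valued in `[0,∞]`. -/
noncomputable def deltaGauge (S : Set (B →L[ℝ] ℝ)) (h g : B × B) : ℝ≥0∞ :=
  ⨆ z ∈ gaugeSet S h g, ⨆ w ∈ gaugeSet S h g, ENNReal.ofReal (Real.log (‖z‖ / ‖w‖))

/-- The real/complex cone setup: a separating family `S` of functionals, an order unit `𝕖`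
whose cone norm is the norm of `B`, and a functional `𝕞` in the weak-* closed convex hull
of `ℝ₊ ⋅ S` dominating the norm on the cone. -/
structure Setup (B : Type*) [NormedAddCommGroup B] [NormedSpace ℝ B] where
  S : Set (B →L[ℝ] ℝ)
  e : B
  mm : B →L[ℝ] ℝ
  κ : ℝ
  separating : ∀ x : B, (∀ ℓ ∈ S, ℓ x = 0) → x = 0
  e_mem : e ∈ realCone S
  arch : ∀ h : B, ∃ l : ℝ, 0 ≤ l ∧ ∀ ℓ ∈ S, 0 ≤ ℓ (l • e - h)
  norm_eq : ∀ h : B,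
    ‖h‖ = sInf {l : ℝ | 0 ≤ l ∧ ∀ ℓ ∈ S, 0 ≤ ℓ (l • e - h) ∧ 0 ≤ ℓ (l • e + h)}
  κ_pos : 0 < κ
  κ_lt_one : κ < 1
  mm_e : mm e = 1
  mm_lower : ∀ h ∈ realCone S, κ * ‖h‖ ≤ mm h
  mm_star : (⇑mm : B → ℝ) ∈ closure ((fun ℓ : B →L[ℝ] ℝ => (⇑ℓ : B → ℝ)) ''
    convexHull ℝ {q : B →L[ℝ] ℝ | ∃ c : ℝ, 0 ≤ c ∧ ∃ ℓ ∈ S, q = c • ℓ})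

section Helpers

variable {B : Type*} [NormedAddCommGroup B] [NormedSpace ℝ B]

lemma cSmul_one (p : B × B) : cSmul 1 p = p := by
  simp [cSmul]

lemma cSmul_zero (z : ℂ) : cSmul z (0 : B × B) = 0 := by
  simp [cSmul]

lemma cSmul_mul (z w : ℂ) (p : B × B) : cSmul z (cSmul w p) = cSmul (z * w) p := by
  unfold cSmul
  refine Prod.ext ?_ ?_ <;>
    simp only [Complex.mul_re, Complex.mul_im, smul_sub, smul_add, smul_smul, sub_smul,
      add_smul] <;> abel

lemma cSmul_ne_zero {z : ℂ} (hz : z ≠ 0) {p : B × B} (hp : p ≠ 0) : cSmul z p ≠ 0 := by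
  intro h
  apply hp
  have h2 := congrArg (cSmul z⁻¹) h
  rwa [cSmul_mul, inv_mul_cancel₀ hz, cSmul_one, cSmul_zero] at h2

lemma cext_re (ℓ : B →L[ℝ] ℝ) (p : B × B) : (cext ℓ p).re = ℓ p.1 := by simp [cext]

lemma cext_im (ℓ : B →L[ℝ] ℝ) (p : B × B) : (cext ℓ p).im = ℓ p.2 := by simp [cext]

lemma cext_fst (ℓ : B →L[ℝ] ℝ) (x : B) : cext ℓ (x, 0) = (ℓ x : ℂ) := by simp [cext]

lemma cext_add (ℓ : B →L[ℝ] ℝ) (p q : B × B) : cext ℓ (p + q) = cext ℓ p + cext ℓ q := by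
  simp [cext]
  push_cast
  ring

lemma cext_cSmul (ℓ : B →L[ℝ] ℝ) (z : ℂ) (p : B × B) :
    cext ℓ (cSmul z p) = z * cext ℓ p := by
  apply Complex.ext <;>
    simp [cext, cSmul, Complex.mul_re, Complex.mul_im, map_sub, map_add, map_smul] <;> ring

lemma cext_continuous (ℓ : B →L[ℝ] ℝ) : Continuous (cext ℓ) := by
  unfold cext
  fun_prop

end Helpers
section Helpers2

variable {B : Type*} [NormedAddCommGroup B] [NormedSpace ℝ B]

lemma combo_mem_realCone {S : Set (B →L[ℝ] ℝ)}
    (hsep : ∀ x : B, (∀ ℓ ∈ S, ℓ x = 0) → x = 0)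
    {x y : B} (hx : x ∈ realCone S) (hy : y ∈ realCone S) {α β : ℝ}
    (hα : 0 ≤ α) (hβ : 0 ≤ β) (hne : α ≠ 0 ∨ β ≠ 0) :
    α • x + β • y ∈ realCone S := by
  refine ⟨?_, fun ℓ hℓ => ?_⟩
  · intro h0
    rcases hne with h | h
    · apply hx.1
      apply hsep
      intro ℓ hℓ
      have h1 := hx.2 ℓ hℓ
      have h2 := hy.2 ℓ hℓ
      have h3 : α * ℓ x + β * ℓ y = 0 := by
        have := congrArg ℓ h0
        simpa [map_add, map_smul] using this
      have hαpos : 0 < α := lt_of_le_of_ne hα (Ne.symm h)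
      nlinarith
    · apply hy.1
      apply hsep
      intro ℓ hℓ
      have h1 := hx.2 ℓ hℓ
      have h2 := hy.2 ℓ hℓ
      have h3 : α * ℓ x + β * ℓ y = 0 := by
        have := congrArg ℓ h0
        simpa [map_add, map_smul] using this
      have hβpos : 0 < β := lt_of_le_of_ne hβ (Ne.symm h)
      nlinarith
  · have h1 := hx.2 ℓ hℓ
    have h2 := hy.2 ℓ hℓ
    simp only [map_add, map_smul, smul_eq_mul]
    positivity

lemma cSmul_half_sub (x : B) : cSmul (⟨1/2, -1/2⟩ : ℂ) (x, x) = (x, 0) := by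
  unfold cSmul
  refine Prod.ext ?_ ?_ <;> simp <;> module

lemma cSmul_half_add (y : B) : cSmul (⟨1/2, 1/2⟩ : ℂ) (y, y) = (0, y) := by
  unfold cSmul
  refine Prod.ext ?_ ?_ <;> simp <;> module

lemma real_mem_complexCone {S : Set (B →L[ℝ] ℝ)} {x : B} (hx : x ∈ realCone S) :
    ((x, (0 : B)) : B × B) ∈ complexCone S :=
  ⟨⟨1/2, -1/2⟩, by simp [Complex.ext_iff], x, hx, x, hx, (cSmul_half_sub x).symm⟩

lemma cSmul_ofReal (r : ℝ) (x : B) : cSmul (r : ℂ) (x, 0) = (r • x, 0) := by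
  simp [cSmul]

lemma cSmul_I (y : B) : cSmul Complex.I ((y, 0) : B × B) = (0, y) := by
  simp [cSmul]

lemma re_mul_conj_eq (z w : ℂ) :
    (z * (starRingEnd ℂ) w).re = ‖z‖ * ‖w‖ * Real.cos (z.arg - w.arg) := by
  conv_lhs => rw [← Complex.norm_mul_exp_arg_mul_I z, ← Complex.norm_mul_exp_arg_mul_I w]
  rw [map_mul, ← Complex.exp_conj]
  simp only [map_mul, Complex.conj_ofReal, Complex.conj_I, mul_neg]
  rw [show (↑(‖z‖) * Complex.exp (↑z.arg * Complex.I) *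
      (↑(‖w‖) * Complex.exp (-(↑w.arg * Complex.I)))) =
      ((‖z‖ * ‖w‖ : ℝ) : ℂ) *
        (Complex.exp (↑z.arg * Complex.I) * Complex.exp (-(↑w.arg * Complex.I))) by
    push_cast; ring]
  rw [← Complex.exp_add, show (↑z.arg * Complex.I + -(↑w.arg * Complex.I)) =
      ((z.arg - w.arg : ℝ) : ℂ) * Complex.I by push_cast; ring]
  rw [Complex.re_ofReal_mul, Complex.exp_ofReal_mul_I_re]

end Helpers2
section Helpers3

lemma quadrant_rotation {T : Set ℂ}
    (hpair : ∀ u ∈ T, ∀ v ∈ T, 0 ≤ (u * (starRingEnd ℂ) v).re)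
    {u₀ : ℂ} (hu₀T : u₀ ∈ T) (hu₀ : u₀ ≠ 0) :
    ∃ z : ℂ, z ≠ 0 ∧ ∀ u ∈ T, 0 ≤ (z * u).re ∧ 0 ≤ (z * u).im := by
  set A : Set ℝ := {t | ∃ u ∈ T, u ≠ 0 ∧ t = (u / u₀).arg} with hA
  have hA0 : (0:ℝ) ∈ A := ⟨u₀, hu₀T, hu₀, by rw [div_self hu₀, Complex.arg_one]⟩
  have hAne : A.Nonempty := ⟨0, hA0⟩
  have hmem : ∀ t ∈ A, |t| ≤ Real.pi / 2 := by
    rintro t ⟨u, huT, hu, rfl⟩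
    rw [Complex.abs_arg_le_pi_div_two_iff]
    have h := hpair u huT u₀ hu₀T
    have h2 : (u * (starRingEnd ℂ) u₀).re = u.re * u₀.re + u.im * u₀.im := by
      simp [Complex.mul_re]
    have h3 : (u / u₀).re = (u.re * u₀.re + u.im * u₀.im) / Complex.normSq u₀ := by
      rw [Complex.div_re]; ring
    rw [h3]
    rw [h2] at h
    exact div_nonneg h (Complex.normSq_nonneg u₀)
  have hdiff : ∀ s ∈ A, ∀ t ∈ A, s - t ≤ Real.pi / 2 := by
    rintro s ⟨u, huT, hu, rfl⟩ t ⟨v, hvT, hv, rfl⟩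
    have habs1 : |(u / u₀).arg| ≤ Real.pi / 2 := hmem _ ⟨u, huT, hu, rfl⟩
    have habs2 : |(v / u₀).arg| ≤ Real.pi / 2 := hmem _ ⟨v, hvT, hv, rfl⟩
    have hre : 0 ≤ ((u / u₀) * (starRingEnd ℂ) (v / u₀)).re := by
      have heq : (u / u₀) * (starRingEnd ℂ) (v / u₀) =
          (u * (starRingEnd ℂ) v) / ((Complex.normSq u₀ : ℝ) : ℂ) := by
        rw [map_div₀, ← Complex.mul_conj]
        field_simp
      rw [heq, Complex.div_ofReal_re]
      have := hpair u huT v hvT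
      have := Complex.normSq_nonneg u₀
      positivity
    rw [re_mul_conj_eq] at hre
    have hab1 : 0 < ‖u / u₀‖ := by
      simpa using norm_pos_iff.mpr (div_ne_zero hu hu₀)
    have hab2 : 0 < ‖v / u₀‖ := by
      simpa using norm_pos_iff.mpr (div_ne_zero hv hu₀)
    have hcos : 0 ≤ Real.cos ((u / u₀).arg - (v / u₀).arg) := by
      by_contra hneg
      push_neg at hneg
      nlinarith [mul_pos hab1 hab2]
    by_contra hgt
    push_neg at hgt
    have hle : |(u / u₀).arg - (v / u₀).arg| ≤ Real.pi := by
      obtain ⟨a1, a2⟩ := abs_le.1 habs1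
      obtain ⟨b1, b2⟩ := abs_le.1 habs2
      rw [abs_le]
      constructor <;> linarith
    have hlt : Real.cos |(u / u₀).arg - (v / u₀).arg| < 0 := by
      apply Real.cos_neg_of_pi_div_two_lt_of_lt
      · calc Real.pi / 2 < (u / u₀).arg - (v / u₀).arg := hgt
          _ ≤ |(u / u₀).arg - (v / u₀).arg| := le_abs_self _
      · have hpi := Real.pi_pos
        linarith
    rw [Real.cos_abs] at hlt
    linarith
  have hbdd : BddBelow A := ⟨-(Real.pi / 2), fun t ht => (abs_le.1 (hmem t ht)).1⟩
  set m := sInf A with hm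
  have hrange : ∀ t ∈ A, 0 ≤ t - m ∧ t - m ≤ Real.pi / 2 := by
    intro t ht
    constructor
    · have := csInf_le hbdd ht
      linarith
    · have : t - Real.pi / 2 ≤ m := le_csInf hAne (fun s hs => by
        have := hdiff t ht s hs
        linarith)
      linarith
  refine ⟨Complex.exp (((-u₀.arg - m : ℝ) : ℂ) * Complex.I), Complex.exp_ne_zero _, ?_⟩
  intro u huT
  by_cases hu : u = 0
  · simp [hu]
  have htA : (u / u₀).arg ∈ A := ⟨u, huT, hu, rfl⟩
  obtain ⟨h0, hpi2⟩ := hrange _ htA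
  set t := (u / u₀).arg
  have hu' : u₀ * (u / u₀) = u := by field_simp
  have key : Complex.exp (((-u₀.arg - m : ℝ) : ℂ) * Complex.I) * u =
      ((‖u₀‖ * ‖u / u₀‖ : ℝ) : ℂ) *
        Complex.exp (((t - m : ℝ) : ℂ) * Complex.I) := by
    calc Complex.exp (((-u₀.arg - m : ℝ) : ℂ) * Complex.I) * u
        = Complex.exp (((-u₀.arg - m : ℝ) : ℂ) * Complex.I) *
            ((↑(‖u₀‖) * Complex.exp (↑u₀.arg * Complex.I)) *
              (↑(‖u / u₀‖) * Complex.exp (↑t * Complex.I))) := by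
          rw [Complex.norm_mul_exp_arg_mul_I u₀, Complex.norm_mul_exp_arg_mul_I (u / u₀), hu']
      _ = ((‖u₀‖ * ‖u / u₀‖ : ℝ) : ℂ) *
            (Complex.exp (((-u₀.arg - m : ℝ) : ℂ) * Complex.I) *
              Complex.exp (↑u₀.arg * Complex.I) * Complex.exp (↑t * Complex.I)) := by
          push_cast; ring
      _ = ((‖u₀‖ * ‖u / u₀‖ : ℝ) : ℂ) *
            Complex.exp (((t - m : ℝ) : ℂ) * Complex.I) := by
          rw [← Complex.exp_add, ← Complex.exp_add]
          congr 1
          push_cast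
          ring
  rw [key]
  have habs : 0 ≤ ‖u₀‖ * ‖u / u₀‖ := by positivity
  constructor
  · rw [Complex.re_ofReal_mul, Complex.exp_ofReal_mul_I_re]
    have : 0 ≤ Real.cos (t - m) := Real.cos_nonneg_of_mem_Icc
      ⟨by linarith [Real.pi_pos], hpi2⟩
    positivity
  · rw [Complex.im_ofReal_mul, Complex.exp_ofReal_mul_I_im]
    have : 0 ≤ Real.sin (t - m) := Real.sin_nonneg_of_nonneg_of_le_pi h0
      (by linarith [Real.pi_pos])
    positivity

end Helpers3


/-- **Lemma 5.6 (characterizations of the complex cone and its dual).**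
(a) `𝒞_ℂ = {h ≠ 0 : Re(ℓ(h) conj(m(h))) ≥ 0 for all ℓ, m ∈ 𝒞'_ℝ}`;
(b) `𝒞'_ℂ = {ℓ ∈ B'_ℂ : Re(ℓ(x) conj(ℓ(y))) > 0 for all x, y ∈ 𝒞_ℝ}`;
(c) `𝒞'_ℂ ⊇ Ĉ'_ℂ`. -/
theorem cone_characterizations {B : Type*} [NormedAddCommGroup B] [NormedSpace ℝ B]
    [CompleteSpace B] (st : Setup B) :
    (complexCone st.S =
      {p : B × B | p ≠ 0 ∧ ∀ ℓ ∈ dualRealCone st.S, ∀ m ∈ dualRealCone st.S,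
        0 ≤ (cext ℓ p * (starRingEnd ℂ) (cext m p)).re}) ∧
    (dualComplexCone st.S =
      {ℓ : B × B → ℂ | IsCLinearFunctional ℓ ∧
        ∀ x ∈ realCone st.S, ∀ y ∈ realCone st.S,
          0 < (ℓ (x, 0) * (starRingEnd ℂ) (ℓ (y, 0))).re}) ∧
    hatDualComplexCone st.S ⊆ dualComplexCone st.S := by
  have hsep := st.separating
  have hSsub : ∀ ℓ ∈ st.S, ℓ ∈ dualRealCone st.S := fun ℓ hℓ h hh => hh.2 ℓ hℓ
  -- Part (a)
  have ha : complexCone st.S =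
      {p : B × B | p ≠ 0 ∧ ∀ ℓ ∈ dualRealCone st.S, ∀ m ∈ dualRealCone st.S,
        0 ≤ (cext ℓ p * (starRingEnd ℂ) (cext m p)).re} := by
    ext p
    constructor
    · rintro ⟨z, hz, x, hx, y, hy, rfl⟩
      constructor
      · exact cSmul_ne_zero hz (fun h => hx.1 (Prod.mk_eq_zero.1 h).1)
      · intro ℓ hℓ m hm
        rw [cext_cSmul, cext_cSmul]
        have heq : z * cext ℓ ((x, y) : B × B) *
            (starRingEnd ℂ) (z * cext m ((x, y) : B × B)) =
            ((Complex.normSq z : ℝ) : ℂ) *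
              (cext ℓ ((x, y) : B × B) * (starRingEnd ℂ) (cext m ((x, y) : B × B))) := by
          rw [map_mul, ← Complex.mul_conj]
          ring
        rw [heq, Complex.re_ofReal_mul]
        apply mul_nonneg (Complex.normSq_nonneg z)
        have e1 : (cext ℓ ((x, y) : B × B) * (starRingEnd ℂ) (cext m ((x, y) : B × B))).re
            = ℓ x * m x + ℓ y * m y := by
          simp [Complex.mul_re, cext_re, cext_im]
        rw [e1]
        have h1 := hℓ x hx
        have h2 := hℓ y hy
        have h3 := hm x hx
        have h4 := hm y hy
        positivity
    · rintro ⟨hp, H⟩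
      set T : Set ℂ := (fun ℓ : B →L[ℝ] ℝ => cext ℓ p) '' dualRealCone st.S with hT
      have hpair : ∀ u ∈ T, ∀ v ∈ T, 0 ≤ (u * (starRingEnd ℂ) v).re := by
        rintro _ ⟨ℓ, hℓ, rfl⟩ _ ⟨m, hm, rfl⟩
        exact H ℓ hℓ m hm
      have hex : ∃ u₀ ∈ T, u₀ ≠ 0 := by
        by_contra hno
        push_neg at hno
        apply hp
        have hz : ∀ ℓ ∈ st.S, ℓ p.1 = 0 ∧ ℓ p.2 = 0 := by
          intro ℓ hℓ
          have h0 := hno _ ⟨ℓ, hSsub ℓ hℓ, rfl⟩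
          have hre := congrArg Complex.re h0
          have him := congrArg Complex.im h0
          rw [cext_re] at hre
          rw [cext_im] at him
          simpa using ⟨hre, him⟩
        have h1 : p.1 = 0 := hsep _ fun ℓ hℓ => (hz ℓ hℓ).1
        have h2 : p.2 = 0 := hsep _ fun ℓ hℓ => (hz ℓ hℓ).2
        exact Prod.ext h1 h2
      obtain ⟨u₀, hu₀T, hu₀⟩ := hex
      obtain ⟨z, hz, hzq⟩ := quadrant_rotation hpair hu₀T hu₀
      set q := cSmul z p with hqdef
      have hq1 : ∀ ℓ ∈ st.S, 0 ≤ ℓ q.1 ∧ 0 ≤ ℓ q.2 := by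
        intro ℓ hℓ
        have h := hzq (cext ℓ p) ⟨ℓ, hSsub ℓ hℓ, rfl⟩
        rw [← cext_cSmul] at h
        rwa [cext_re, cext_im] at h
      have hpq : p = cSmul z⁻¹ q := by
        rw [hqdef, cSmul_mul, inv_mul_cancel₀ hz, cSmul_one]
      by_cases h1 : q.1 = 0 <;> by_cases h2 : q.2 = 0
      · exfalso
        apply hp
        rw [hpq, show q = 0 from Prod.ext h1 h2, cSmul_zero]
      · refine ⟨z⁻¹ * ⟨1/2, 1/2⟩,
          mul_ne_zero (inv_ne_zero hz) (by simp [Complex.ext_iff]),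
          q.2, ⟨h2, fun ℓ hℓ => (hq1 ℓ hℓ).2⟩, q.2, ⟨h2, fun ℓ hℓ => (hq1 ℓ hℓ).2⟩, ?_⟩
        rw [hpq, ← cSmul_mul, cSmul_half_add, ← h1]
      · refine ⟨z⁻¹ * ⟨1/2, -1/2⟩,
          mul_ne_zero (inv_ne_zero hz) (by simp [Complex.ext_iff]),
          q.1, ⟨h1, fun ℓ hℓ => (hq1 ℓ hℓ).1⟩, q.1, ⟨h1, fun ℓ hℓ => (hq1 ℓ hℓ).1⟩, ?_⟩
        rw [hpq, ← cSmul_mul, cSmul_half_sub, ← h2]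
      · exact ⟨z⁻¹, inv_ne_zero hz, q.1, ⟨h1, fun ℓ hℓ => (hq1 ℓ hℓ).1⟩,
          q.2, ⟨h2, fun ℓ hℓ => (hq1 ℓ hℓ).2⟩, by rw [hpq]⟩
  -- Part (b)
  have hb : dualComplexCone st.S =
      {ℓ : B × B → ℂ | IsCLinearFunctional ℓ ∧
        ∀ x ∈ realCone st.S, ∀ y ∈ realCone st.S,
          0 < (ℓ (x, 0) * (starRingEnd ℂ) (ℓ (y, 0))).re} := by
    ext ℓf
    constructor
    · rintro ⟨hlin, hne⟩
      refine ⟨hlin, ?_⟩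
      intro x hx y hy
      set Av := ℓf (x, 0) with hAv
      set Bv := ℓf (y, 0) with hBv
      have hA : Av ≠ 0 := hne _ (real_mem_complexCone hx)
      have hB : Bv ≠ 0 := hne _ (real_mem_complexCone hy)
      by_contra hle
      push_neg at hle
      set u : ℂ := -(Av / Bv) with hu_def
      have hure : 0 ≤ u.re := by
        have hd1 : (Av / Bv).re = (Av.re * Bv.re + Av.im * Bv.im) / Complex.normSq Bv := by
          rw [Complex.div_re]; ring
        have hd2 : (Av * (starRingEnd ℂ) Bv).re = Av.re * Bv.re + Av.im * Bv.im := by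
          simp [Complex.mul_re]
        rw [hd2] at hle
        have hdiv : (Av / Bv).re ≤ 0 := by
          rw [hd1]
          exact div_nonpos_of_nonpos_of_nonneg hle (Complex.normSq_nonneg Bv)
        have : u.re = -(Av / Bv).re := by simp [hu_def]
        linarith [this ▸ neg_nonneg.mpr hdiv]
      have hune : u ≠ 0 := by
        simp only [hu_def, ne_eq, neg_eq_zero]
        exact div_ne_zero hA hB
      have main : ∀ z₁ : ℂ, 0 ≤ z₁.re → 0 ≤ z₁.im → 0 ≤ (z₁ * u).re → 0 ≤ (z₁ * u).im →
          (z₁.re ≠ 0 ∨ (z₁ * u).re ≠ 0) → (z₁.im ≠ 0 ∨ (z₁ * u).im ≠ 0) → False := by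
        intro z₁ hr1 hi1 hr2 hi2 hn1 hn2
        set x' := z₁.re • x + (z₁ * u).re • y with hx'
        set y' := z₁.im • x + (z₁ * u).im • y with hy'
        have hx'' : x' ∈ realCone st.S := combo_mem_realCone hsep hx hy hr1 hr2 hn1
        have hy'' : y' ∈ realCone st.S := combo_mem_realCone hsep hx hy hi1 hi2 hn2
        have hmemC : ((x', y') : B × B) ∈ complexCone st.S :=
          ⟨1, one_ne_zero, x', hx'', y', hy'', (cSmul_one _).symm⟩
        apply hne _ hmemC
        have hsplit : ((x', y') : B × B) = (x', 0) + cSmul Complex.I (y', 0) := by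
          rw [cSmul_I]
          simp
        have hval1 : ℓf (x', 0) = (z₁.re : ℂ) * Av + ((z₁ * u).re : ℂ) * Bv := by
          have hxx : ((x', 0) : B × B) =
              cSmul ((z₁.re : ℝ) : ℂ) (x, 0) + cSmul (((z₁ * u).re : ℝ) : ℂ) (y, 0) := by
            rw [cSmul_ofReal, cSmul_ofReal, hx']
            simp
          rw [hxx, hlin.1, hlin.2.1, hlin.2.1]
        have hval2 : ℓf (y', 0) = (z₁.im : ℂ) * Av + ((z₁ * u).im : ℂ) * Bv := by
          have hyy : ((y', 0) : B × B) =
              cSmul ((z₁.im : ℝ) : ℂ) (x, 0) + cSmul (((z₁ * u).im : ℝ) : ℂ) (y, 0) := by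
            rw [cSmul_ofReal, cSmul_ofReal, hy']
            simp
          rw [hyy, hlin.1, hlin.2.1, hlin.2.1]
        rw [hsplit, hlin.1, hlin.2.1, hval1, hval2]
        have hz1 : (z₁.re : ℂ) + (z₁.im : ℂ) * Complex.I = z₁ := Complex.re_add_im z₁
        have hz2 : ((z₁ * u).re : ℂ) + ((z₁ * u).im : ℂ) * Complex.I = z₁ * u :=
          Complex.re_add_im _
        have huB : u * Bv = -Av := by
          rw [hu_def]
          field_simp
        linear_combination Av * hz1 + Bv * hz2 + z₁ * huB
      rcases lt_trichotomy u.im 0 with him | him | him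
      · refine main Complex.I (by simp) (by simp) ?_ ?_ (Or.inr ?_) (Or.inl (by simp))
        · simp only [Complex.mul_re, Complex.I_re, Complex.I_im]
          nlinarith
        · simp only [Complex.mul_im, Complex.I_re, Complex.I_im]
          nlinarith
        · simp only [Complex.mul_re, Complex.I_re, Complex.I_im]
          intro hcon
          nlinarith
      · have hrepos : 0 < u.re := by
          rcases lt_or_eq_of_le hure with h | h
          · exact h
          · exfalso
            exact hune (Complex.ext h.symm him)
        refine main (1 + Complex.I) (by simp) (by simp) ?_ ?_ (Or.inl (by simp)) (Or.inl (by simp))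
        · simp only [Complex.mul_re, Complex.add_re, Complex.add_im, Complex.one_re,
            Complex.one_im, Complex.I_re, Complex.I_im]
          nlinarith
        · simp only [Complex.mul_im, Complex.add_re, Complex.add_im, Complex.one_re,
            Complex.one_im, Complex.I_re, Complex.I_im]
          nlinarith
      · refine main 1 (by simp) (by simp) (by simpa using hure) (by simpa using him.le)
          (Or.inl (by simp)) (Or.inr ?_)
        simpa using him.ne'
    · rintro ⟨hlin, hpos⟩
      refine ⟨hlin, ?_⟩
      rintro h ⟨z, hz, x, hx, y, hy, rfl⟩
      rw [hlin.2.1]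
      apply mul_ne_zero hz
      intro h0
      have hsplit : ((x, y) : B × B) = (x, 0) + cSmul Complex.I (y, 0) := by
        rw [cSmul_I]
        simp
      rw [hsplit, hlin.1, hlin.2.1] at h0
      have hA : ℓf (x, 0) = -(Complex.I * ℓf (y, 0)) := by linear_combination h0
      have hlt := hpos x hx y hy
      rw [hA, show -(Complex.I * ℓf (y, 0)) * (starRingEnd ℂ) (ℓf (y, 0)) =
          -(Complex.I * (ℓf (y, 0) * (starRingEnd ℂ) (ℓf (y, 0)))) by ring,
        Complex.mul_conj] at hlt
      simp [Complex.mul_re] at hlt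
  -- Part (c)
  have hc : hatDualComplexCone st.S ⊆ dualComplexCone st.S := by
    rintro qf ⟨ℓ, hℓ, pf, hpf, ε₁, hε₁, ε₂, hε₂, rfl⟩
    rw [hb]
    refine ⟨⟨?_, ?_, ?_⟩, ?_⟩
    · intro p q
      simp only [cext_add]
      ring
    · intro z p
      simp only [cext_cSmul]
      ring
    · exact ((continuous_const.mul (cext_continuous ℓ)).add
        ((continuous_const.mul (cext_continuous pf))))
    · intro x hx y hy
      simp only [cext_fst]
      have h1 := hℓ.2 x hx
      have h2 := hℓ.2 y hy
      have h3 := hpf.2 x hx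
      have h4 := hpf.2 y hy
      have he1 : ε₁ = 1 ∨ ε₁ = -1 := by simpa using hε₁
      have he2 : ε₂ = 1 ∨ ε₂ = -1 := by simpa using hε₂
      rcases he1 with rfl | rfl <;> rcases he2 with rfl | rfl <;>
        · simp only [Complex.mul_re, Complex.add_re, Complex.add_im, Complex.mul_im,
            Complex.conj_re, Complex.conj_im, Complex.ofReal_re, Complex.ofReal_im,
            Complex.I_re, Complex.I_im, Complex.ofReal_one, Complex.ofReal_neg,
            Complex.one_re, Complex.one_im, Complex.neg_re, Complex.neg_im]
          nlinarith [mul_pos h1 h2, mul_pos h3 h4]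
  exact ⟨ha, hb, hc⟩

end ConeSetup
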